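/- There is a sequence of finitely generated infinite-index subgroups H_k of the free group F_2 such that the exponential growth rates λ_{H_k} (with respect to the standard Cayley graph of F_2) converge to 3 = λ_{F_2}. Specifically, for each k one can choose H_k with λ_{H_k} ≥ 3·(2/3)^{1/k}. -/

import Mathlib

open Filter

/-- The exponential growth rate of a subgroup `H` of the free group on two generators,
with respect to the standard word metric: `limsup_n f_H(n)^{1/n}` where
`f_H(n) = #{h ∈ H : |h| ≤ n}`. -/
noncomputable def subgroupGrowthRate (H : Subgroup (FreeGroup (Fin 2))) : ℝ :=
  Filter.limsup
    (fun n : ℕ => (Nat.card {g : FreeGroup (Fin 2) // g ∈ H ∧ g.norm ≤ n} : ℝ) ^ ((1 : ℝ) / n))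
    atTop

namespace GrowthProof

abbrev Ltr := Fin 2 × Bool

/-- the inverse letter -/
def linv (x : Ltr) : Ltr := (x.1, !x.2)

/-- non-cancellation relation between adjacent letters -/
def NC (x y : Ltr) : Prop := y ≠ linv x

instance : DecidableRel NC := fun x y => by unfold NC; infer_instance

lemma nc_iff : ∀ (x y : Ltr), NC x y ↔ ¬(x.1 = y.1 ∧ x.2 = !y.2) := by decide

lemma reduce_eq_self_of_chain : ∀ (l : List Ltr), List.Chain' NC l → FreeGroup.reduce l = l := by
  intro l
  induction l with
  | nil => intro _; rfl
  | cons x L ih =>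
    intro h
    rw [FreeGroup.reduce.cons, ih h.tail]
    cases L with
    | nil => rfl
    | cons hd tl =>
      have hnc : NC x hd := List.isChain_cons_cons.1 h |>.1
      simp only [List.casesOn]
      rw [if_neg ((nc_iff x hd).1 hnc)]

lemma chain_reduce : ∀ (l : List Ltr), List.Chain' NC (FreeGroup.reduce l) := by
  intro l
  induction l with
  | nil => exact List.isChain_nil
  | cons x L ih =>
    rw [FreeGroup.reduce.cons]
    cases r : FreeGroup.reduce L with
    | nil => exact List.isChain_singleton x
    | cons hd tl =>
      rw [r] at ih
      by_cases hc : x.1 = hd.1 ∧ x.2 = !hd.2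
      · have h' : List.Chain' NC tl := ih.tail
        simpa [hc] using h'
      · simp only [if_neg hc]
        exact List.isChain_cons_cons.2 ⟨(nc_iff x hd).2 hc, ih⟩

/-- the list of all letters -/
def allL : List Ltr := [(0, true), (0, false), (1, true), (1, false)]

/-- the three letters that may follow `x` in a reduced word -/
def succs (x : Ltr) : List Ltr := allL.filter (fun y => y ≠ linv x)

lemma succs_length : ∀ x : Ltr, (succs x).length = 3 := by decide

/-- the `t`-th allowed successor of `x` -/
def σ (x : Ltr) (t : Fin 3) : Ltr := (succs x).get (Fin.cast (succs_length x).symm t)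

/-- index of `y` among successors of `x` -/
def δ (x y : Ltr) : Fin 3 := ⟨min 2 ((succs x).idxOf y), by omega⟩

lemma σ_nc : ∀ (x : Ltr) (t : Fin 3), NC x (σ x t) := by decide

lemma σ_inj : ∀ (x : Ltr) (t t' : Fin 3), σ x t = σ x t' → t = t' := by decide

lemma σ_δ : ∀ (x y : Ltr), NC x y → σ x (δ x y) = y := by decide

/-- the first letter of every block -/
def A : Ltr := (0, true)

/-- the final letter of a block, chosen to be a `b`-letter not cancelling `x` -/
def τ (x : Ltr) : Ltr := if x = ((1 : Fin 2), false) then ((1 : Fin 2), false) else ((1 : Fin 2), true)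

lemma τ_nc : ∀ x : Ltr, NC x (τ x) := by decide

lemma τ_fst : ∀ x : Ltr, (τ x).1 = 1 := by decide

lemma nc_A : ∀ y : Ltr, y.1 = 1 → NC y A := by decide

/-- Build a reduced block: starting letter `x`, then successors driven by `ts`,
then a final `b`-type letter. -/
def blockAux (x : Ltr) : List (Fin 3) → List Ltr
  | [] => [x, τ x]
  | t :: ts => x :: blockAux (σ x t) ts

lemma blockAux_length : ∀ (ts : List (Fin 3)) (x : Ltr), (blockAux x ts).length = ts.length + 2 := by
  intro ts
  induction ts with
  | nil => intro x; rfl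
  | cons t ts ih =>
    intro x
    simp only [blockAux, List.length_cons, ih (σ x t)]

lemma blockAux_head (x : Ltr) (ts : List (Fin 3)) : (blockAux x ts).head? = some x := by
  cases ts <;> rfl

lemma blockAux_ne_nil (x : Ltr) (ts : List (Fin 3)) : blockAux x ts ≠ [] := by
  cases ts <;> simp [blockAux]

lemma blockAux_chain : ∀ (ts : List (Fin 3)) (x : Ltr), List.Chain' NC (blockAux x ts) := by
  intro ts
  induction ts with
  | nil => intro x; exact List.isChain_pair.2 (τ_nc x)
  | cons t ts ih =>
    intro x
    refine List.IsChain.cons (ih (σ x t)) ?_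
    intro y hy
    rw [blockAux_head] at hy
    cases hy
    exact σ_nc x t

lemma blockAux_last_fst : ∀ (ts : List (Fin 3)) (x : Ltr) (y : Ltr),
    (blockAux x ts).getLast? = some y → y.1 = 1 := by
  intro ts
  induction ts with
  | nil =>
    intro x y h
    simp [blockAux] at h
    cases h
    exact τ_fst x
  | cons t ts ih =>
    intro x y h
    rw [blockAux] at h
    obtain ⟨z, l', hzl⟩ := List.exists_cons_of_ne_nil (blockAux_ne_nil (σ x t) ts)
    rw [hzl, List.getLast?_cons_cons, ← hzl] at h
    exact ih (σ x t) y h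

lemma blockAux_inj : ∀ (ts ts' : List (Fin 3)) (x : Ltr),
    ts.length = ts'.length → blockAux x ts = blockAux x ts' → ts = ts' := by
  intro ts
  induction ts with
  | nil =>
    intro ts' x hl _
    cases ts' with
    | nil => rfl
    | cons => simp at hl
  | cons t ts ih =>
    intro ts' x hl h
    cases ts' with
    | nil => simp at hl
    | cons t' ts'' =>
      rw [blockAux, blockAux] at h
      have htail := (List.cons.injEq _ _ _ _ ▸ h)
      have h2 : blockAux (σ x t) ts = blockAux (σ x t') ts'' := (List.cons_injective.eq_iff.1 h)
      have hhead : σ x t = σ x t' := by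
        have := congrArg List.head? h2
        rw [blockAux_head, blockAux_head] at this
        exact Option.some_injective _ this
      have ht : t = t' := σ_inj x t t' hhead
      subst ht
      have : ts = ts'' := ih ts'' (σ x t) (by simpa using hl) h2
      rw [this]

variable {j : ℕ}

/-- A block word of length `j+2` driven by `c`. -/
def W (c : Fin j → Fin 3) : List Ltr := blockAux A (List.ofFn c)

lemma W_length (c : Fin j → Fin 3) : (W c).length = j + 2 := by
  simp [W, blockAux_length]

lemma W_chain (c : Fin j → Fin 3) : List.Chain' NC (W c) := blockAux_chain _ _

lemma W_ne_nil (c : Fin j → Fin 3) : W c ≠ [] := blockAux_ne_nil _ _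

lemma W_head (c : Fin j → Fin 3) : (W c).head? = some A := blockAux_head _ _

lemma W_last_fst (c : Fin j → Fin 3) {y : Ltr} (h : (W c).getLast? = some y) : y.1 = 1 :=
  blockAux_last_fst _ _ _ h

lemma W_inj : Function.Injective (W (j := j)) := by
  intro c c' h
  have := blockAux_inj (List.ofFn c) (List.ofFn c') A (by simp) h
  exact List.ofFn_injective this

/-- Concatenation of blocks. -/
def P : List (Fin j → Fin 3) → List Ltr
  | [] => []
  | c :: cl => W c ++ P cl

lemma P_length : ∀ cl : List (Fin j → Fin 3), (P cl).length = cl.length * (j + 2) := by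
  intro cl
  induction cl with
  | nil => simp [P]
  | cons c cl ih => simp [P, W_length, ih]; ring

lemma P_head : ∀ (cl : List (Fin j → Fin 3)), cl ≠ [] → (P cl).head? = some A := by
  intro cl h
  cases cl with
  | nil => exact absurd rfl h
  | cons c cl =>
    rw [P, List.head?_append_of_ne_nil _ (W_ne_nil c)]
    exact W_head c

lemma P_chain : ∀ cl : List (Fin j → Fin 3), List.Chain' NC (P cl) := by
  intro cl
  induction cl with
  | nil => exact List.isChain_nil
  | cons c cl ih =>
    rw [P]; change List.IsChain NC (W c ++ P cl); rw [List.isChain_append]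
    refine ⟨W_chain c, ih, ?_⟩
    intro x hx y hy
    by_cases hcl : cl = []
    · subst hcl; simp [P] at hy
    · rw [P_head cl hcl] at hy
      cases hy
      exact nc_A x (W_last_fst c hx)

lemma P_inj : ∀ cl cl' : List (Fin j → Fin 3), P cl = P cl' → cl = cl' := by
  intro cl
  induction cl with
  | nil =>
    intro cl' h
    cases cl' with
    | nil => rfl
    | cons c cl' =>
      exfalso
      have := congrArg List.length h
      rw [P_length, P_length] at this
      simp at this
  | cons c cl ih =>
    intro cl' h
    cases cl' with
    | nil =>
      exfalso
      have := congrArg List.length h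
      rw [P_length, P_length] at this
      simp at this
    | cons c' cl'' =>
      rw [P, P] at h
      obtain ⟨h1, h2⟩ := List.append_inj h (by rw [W_length, W_length])
      rw [W_inj h1, ih cl'' h2]

/-- The free group element corresponding to a list of blocks. -/
def gP (cl : List (Fin j → Fin 3)) : FreeGroup (Fin 2) := FreeGroup.mk (P cl)

lemma toWord_gP (cl : List (Fin j → Fin 3)) : (gP cl).toWord = P cl := by
  rw [gP, FreeGroup.toWord_mk, reduce_eq_self_of_chain _ (P_chain cl)]

lemma norm_gP (cl : List (Fin j → Fin 3)) : (gP cl).norm = cl.length * (j + 2) := by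
  rw [FreeGroup.norm, toWord_gP, P_length]

lemma gP_inj : Function.Injective (gP (j := j)) := by
  intro cl cl' h
  exact P_inj cl cl' (by rw [← toWord_gP cl, ← toWord_gP cl', h])

lemma gP_mem {S : Set (FreeGroup (Fin 2))} :
    ∀ (cl : List (Fin j → Fin 3)), (∀ c ∈ cl, FreeGroup.mk (W c) ∈ S) →
      gP cl ∈ Subgroup.closure S := by
  intro cl
  induction cl with
  | nil => intro _; exact Subgroup.one_mem _
  | cons c cl ih =>
    intro h
    have : gP (c :: cl) = FreeGroup.mk (W c) * gP cl := by
      rw [gP, gP, P, FreeGroup.mul_mk]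
    rw [this]
    exact Subgroup.mul_mem _ (Subgroup.subset_closure (h c (by simp)))
      (ih fun c' hc' => h c' (by simp [hc']))

/-- Encode a reduced word as its sequence of successor indices. -/
def encL : List Ltr → List (Fin 3)
  | [] => []
  | [_] => []
  | x :: y :: t => δ x y :: encL (y :: t)

/-- Rebuild a reduced word from its head and successor indices. -/
def rebuild : Ltr → List (Fin 3) → List Ltr
  | x, [] => [x]
  | x, d :: ds => x :: rebuild (σ x d) ds

lemma encL_length : ∀ (t : List Ltr) (x : Ltr), (encL (x :: t)).length = t.length := by
  intro t
  induction t with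
  | nil => intro x; rfl
  | cons y t ih => intro x; simp [encL, ih y]

lemma rebuild_encL : ∀ (t : List Ltr) (x : Ltr),
    List.Chain' NC (x :: t) → rebuild x (encL (x :: t)) = x :: t := by
  intro t
  induction t with
  | nil => intro x _; rfl
  | cons y t ih =>
    intro x h
    have hnc : NC x y := (List.isChain_cons_cons.1 h).1
    rw [encL, rebuild, σ_δ x y hnc, ih y (List.isChain_cons_cons.1 h).2]

/-- The encoding of an element of the ball of radius `n`. -/
def ballEnc (n : ℕ) (g : FreeGroup (Fin 2)) (hg : g.norm ≤ n) :
    Option (Ltr × Fin (n + 1) × (Fin n → Fin 3)) :=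
  match h : g.toWord with
  | [] => none
  | x :: t => some (x, ⟨t.length, by
      have := hg
      rw [FreeGroup.norm, h] at this
      simp only [List.length_cons] at this
      omega⟩,
      fun i => (encL (x :: t)).getD i 0)

lemma toWord_chain (g : FreeGroup (Fin 2)) : List.Chain' NC g.toWord := by
  have := chain_reduce g.toWord
  rwa [FreeGroup.reduce_toWord] at this

lemma ballEnc_inj (n : ℕ) (g g' : FreeGroup (Fin 2)) (hg : g.norm ≤ n) (hg' : g'.norm ≤ n)
    (h : ballEnc n g hg = ballEnc n g' hg') : g = g' := by
  rw [← FreeGroup.toWord_inj]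
  unfold ballEnc at h
  split at h <;> split at h
  · rename_i h1 h2
    rw [h1, h2]
  · exact absurd h (by simp)
  · exact absurd h (by simp)
  · rename_i x t h1 x' t' h2
    simp only [Option.some.injEq, Prod.mk.injEq, Fin.mk.injEq] at h
    obtain ⟨hx, hlen, hfun⟩ := h
    subst hx
    have hlt : t.length ≤ n - 1 ∧ 1 ≤ n := by
      have := hg
      rw [FreeGroup.norm, h1] at this
      simp only [List.length_cons] at this
      omega
    have henc : encL (x :: t) = encL (x :: t') := by
      apply List.ext_getElem
      · rw [encL_length, encL_length, hlen]
      · intro i hi1 hi2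
        have hin : i < n := by
          rw [encL_length] at hi1
          omega
        have := congrFun hfun ⟨i, hin⟩
        simpa [List.getD_eq_getElem, hi1, hi2] using this
    have e1 := rebuild_encL t x (h1 ▸ toWord_chain g)
    have e2 := rebuild_encL t' x (h2 ▸ toWord_chain g')
    rw [h1, h2, ← e1, ← e2, henc]

lemma ball_finite (H : Subgroup (FreeGroup (Fin 2))) (n : ℕ) :
    Finite {g : FreeGroup (Fin 2) // g ∈ H ∧ g.norm ≤ n} := by
  have : Function.Injective
      (fun g : {g : FreeGroup (Fin 2) // g ∈ H ∧ g.norm ≤ n} => ballEnc n g.1 g.2.2) := by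
    intro g g' h
    exact Subtype.ext (ballEnc_inj n g.1 g'.1 g.2.2 g'.2.2 h)
  exact Finite.of_injective _ this

lemma card_ball_le (H : Subgroup (FreeGroup (Fin 2))) (n : ℕ) :
    Nat.card {g : FreeGroup (Fin 2) // g ∈ H ∧ g.norm ≤ n} ≤ 4 * (n + 1) * 3 ^ n + 1 := by
  have hinj : Function.Injective
      (fun g : {g : FreeGroup (Fin 2) // g ∈ H ∧ g.norm ≤ n} => ballEnc n g.1 g.2.2) := by
    intro g g' h
    exact Subtype.ext (ballEnc_inj n g.1 g'.1 g.2.2 g'.2.2 h)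
  have := Nat.card_le_card_of_injective _ hinj
  calc Nat.card {g : FreeGroup (Fin 2) // g ∈ H ∧ g.norm ≤ n}
      ≤ Nat.card (Option (Ltr × Fin (n + 1) × (Fin n → Fin 3))) := this
    _ = 4 * (n + 1) * 3 ^ n + 1 := by
        rw [Nat.card_eq_fintype_card]
        simp [Fintype.card_option, Fintype.card_prod, Fintype.card_fun]
        ring

/-- basis vectors of `ℤ × ℤ` -/
def bse (i : Fin 2) : ℤ × ℤ := if i = 0 then (1, 0) else (0, 1)

/-- the abelianization homomorphism -/
noncomputable def Ahom : FreeGroup (Fin 2) →* Multiplicative (ℤ × ℤ) :=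
  FreeGroup.lift (fun i => Multiplicative.ofAdd (bse i))

/-- the abelianized value of a letter -/
def lv (x : Ltr) : ℤ × ℤ := if x.2 then bse x.1 else -bse x.1

lemma mk_single_false (i : Fin 2) : FreeGroup.mk [(i, false)] = (FreeGroup.of i)⁻¹ := by
  apply FreeGroup.toWord_injective
  rw [FreeGroup.toWord_inv, FreeGroup.toWord_of]
  rfl

lemma Ahom_single (x : Ltr) : Ahom (FreeGroup.mk [x]) = Multiplicative.ofAdd (lv x) := by
  obtain ⟨i, b⟩ := x
  cases b
  · rw [mk_single_false, map_inv, lv]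
    show (Ahom (FreeGroup.of i))⁻¹ = _
    rw [Ahom, FreeGroup.lift_apply_of]
    rfl
  · show Ahom (FreeGroup.of i) = _
    rw [Ahom, FreeGroup.lift_apply_of]
    rfl

lemma lv_abs (x : Ltr) : |(lv x).1| ≤ 1 ∧ |(lv x).2| ≤ 1 := by
  obtain ⟨i, b⟩ := x
  fin_cases i <;> cases b <;> simp [lv, bse]

lemma Ahom_bound : ∀ l : List Ltr,
    |(Multiplicative.toAdd (Ahom (FreeGroup.mk l))).1| ≤ l.length ∧
    |(Multiplicative.toAdd (Ahom (FreeGroup.mk l))).2| ≤ l.length := by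
  intro l
  induction l with
  | nil =>
    have : FreeGroup.mk ([] : List Ltr) = 1 := rfl
    rw [this, map_one]
    simp
  | cons x l ih =>
    have hm : FreeGroup.mk (x :: l) = FreeGroup.mk [x] * FreeGroup.mk l := by
      rw [FreeGroup.mul_mk]; rfl
    rw [hm, map_mul, Ahom_single]
    have h1 := (lv_abs x).1
    have h2 := (lv_abs x).2
    have e : Multiplicative.toAdd (Multiplicative.ofAdd (lv x) * Ahom (FreeGroup.mk l))
        = lv x + Multiplicative.toAdd (Ahom (FreeGroup.mk l)) := rfl
    rw [e]
    constructor
    · calc |(lv x + Multiplicative.toAdd (Ahom (FreeGroup.mk l))).1|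
          ≤ |(lv x).1| + |(Multiplicative.toAdd (Ahom (FreeGroup.mk l))).1| := abs_add_le _ _
        _ ≤ 1 + l.length := add_le_add h1 ih.1
        _ = (x :: l).length := by simp [add_comm]
    · calc |(lv x + Multiplicative.toAdd (Ahom (FreeGroup.mk l))).2|
          ≤ |(lv x).2| + |(Multiplicative.toAdd (Ahom (FreeGroup.mk l))).2| := abs_add_le _ _
        _ ≤ 1 + l.length := add_le_add h2 ih.2
        _ = (x :: l).length := by simp [add_comm]

/-- a linear functional on `ℤ × ℤ` -/
def lin (w : ℤ × ℤ) : (ℤ × ℤ) →+ ℤ :=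
  AddMonoidHom.mk' (fun v => w.1 * v.1 + w.2 * v.2) (by intro a b; simp; ring)

/-- the composite character -/
noncomputable def χ (w : ℤ × ℤ) : FreeGroup (Fin 2) →* Multiplicative ℤ :=
  (AddMonoidHom.toMultiplicative (lin w)).comp Ahom

lemma χ_apply (w : ℤ × ℤ) (g : FreeGroup (Fin 2)) :
    χ w g = Multiplicative.ofAdd (lin w (Multiplicative.toAdd (Ahom g))) := rfl

lemma χ_ker_index (w : ℤ × ℤ) (hw : w ≠ 0) : (MonoidHom.ker (χ w)).index = 0 := by
  rw [Subgroup.index_ker]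
  -- pick a generator with nonzero character value
  obtain ⟨i, d, hd, hval⟩ : ∃ (i : Fin 2) (d : ℤ), d ≠ 0 ∧ χ w (FreeGroup.of i)
      = Multiplicative.ofAdd d := by
    by_cases h1 : w.1 ≠ 0
    · refine ⟨0, w.1, h1, ?_⟩
      rw [χ_apply]
      congr 1
      show lin w (Multiplicative.toAdd (Ahom (FreeGroup.of 0))) = w.1
      rw [Ahom, FreeGroup.lift_apply_of]
      show w.1 * 1 + w.2 * 0 = w.1
      ring
    · have h2 : w.2 ≠ 0 := by
        intro h2
        exact hw (Prod.ext (not_not.1 h1) h2)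
      refine ⟨1, w.2, h2, ?_⟩
      rw [χ_apply]
      congr 1
      show lin w (Multiplicative.toAdd (Ahom (FreeGroup.of 1))) = w.2
      rw [Ahom, FreeGroup.lift_apply_of]
      show w.1 * 0 + w.2 * 1 = w.2
      ring
  have hinj : Function.Injective (fun n : ℕ => χ w (FreeGroup.of i ^ n)) := by
    intro n m h
    simp only [map_pow, hval, ← ofAdd_nsmul] at h
    have := Multiplicative.ofAdd.injective h
    have : (n : ℤ) * d = (m : ℤ) * d := by
      rwa [nsmul_eq_mul, nsmul_eq_mul] at this
    exact_mod_cast mul_right_cancel₀ hd this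
  have hinf : (Set.range ⇑(χ w)).Infinite :=
    Set.infinite_of_injective_forall_mem hinj (fun n => Set.mem_range_self _)
  haveI : Infinite ↥(Set.range ⇑(χ w)) := hinf.to_subtype
  haveI : Infinite ↥(χ w).range := by
    rw [← MonoidHom.coe_range] at hinf
    exact hinf.to_subtype
  exact Nat.card_eq_zero_of_infinite

/-- the guaranteed number of blocks -/
def n₀ (j : ℕ) : ℕ := 3 ^ j / (2 * j + 5) ^ 2

lemma exists_good (j : ℕ) : ∃ Gr : Subgroup (FreeGroup (Fin 2)), Gr.FG ∧ Gr.index = 0 ∧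
    ∀ m : ℕ, (n₀ j) ^ m ≤ Nat.card {g : FreeGroup (Fin 2) // g ∈ Gr ∧ g.norm ≤ m * (j + 2)} := by
  classical
  set eAb : (Fin j → Fin 3) → ℤ × ℤ :=
    fun c => Multiplicative.toAdd (Ahom (FreeGroup.mk (W c))) with heAb
  set box : Finset (ℤ × ℤ) :=
    Finset.Icc (-(j + 2 : ℤ)) (j + 2) ×ˢ Finset.Icc (-(j + 2 : ℤ)) (j + 2) with hbox
  have hmaps : ∀ c ∈ (Finset.univ : Finset (Fin j → Fin 3)), eAb c ∈ box := by
    intro c _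
    have hb := Ahom_bound (W c)
    rw [W_length] at hb
    rw [hbox, Finset.mem_product, Finset.mem_Icc, Finset.mem_Icc]
    constructor
    · have := abs_le.1 hb.1
      exact ⟨by exact_mod_cast this.1, by exact_mod_cast this.2⟩
    · have := abs_le.1 hb.2
      exact ⟨by exact_mod_cast this.1, by exact_mod_cast this.2⟩
  have hboxcard : box.card = (2 * j + 5) ^ 2 := by
    rw [hbox, Finset.card_product, Int.card_Icc]
    have : ((j : ℤ) + 2 + 1 - -((j : ℤ) + 2)).toNat = 2 * j + 5 := by omega
    rw [this]
    ring
  have hcard : box.card * n₀ j ≤ (Finset.univ : Finset (Fin j → Fin 3)).card := by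
    rw [hboxcard, Finset.card_univ]
    have : Fintype.card (Fin j → Fin 3) = 3 ^ j := by simp
    rw [this, n₀, mul_comm]
    exact Nat.div_mul_le_self _ _
  have hne : box.Nonempty := by
    refine ⟨(0, 0), ?_⟩
    simp only [hbox, Finset.mem_product, Finset.mem_Icc]
    omega
  obtain ⟨pq, _, hpq⟩ := Finset.exists_le_card_fiber_of_mul_le_card_of_maps_to hmaps hne hcard
  set C : Finset (Fin j → Fin 3) := Finset.filter (fun c => eAb c = pq) Finset.univ with hC
  set S : Set (FreeGroup (Fin 2)) := (fun c => FreeGroup.mk (W c)) '' (C : Set (Fin j → Fin 3))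
    with hS
  refine ⟨Subgroup.closure S, ?_, ?_, ?_⟩
  · -- finitely generated
    exact (Subgroup.fg_iff _).2 ⟨S, rfl, C.finite_toSet.image _⟩
  · -- infinite index
    set w : ℤ × ℤ := if pq = 0 then (1, 0) else (pq.2, -pq.1) with hw
    have hwne : w ≠ 0 := by
      rw [hw]
      split
      · intro h; exact one_ne_zero (congrArg Prod.fst h)
      · rename_i hpq0
        intro h
        apply hpq0
        have h1 := congrArg Prod.fst h
        have h2 := congrArg Prod.snd h
        simp at h1 h2
        exact Prod.ext h2 h1
    have hgen : ∀ g ∈ S, g ∈ MonoidHom.ker (χ w) := by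
      rintro g ⟨c, hc, rfl⟩
      have hc' : c ∈ C := hc
      have hval : Multiplicative.toAdd (Ahom (FreeGroup.mk (W c))) = pq :=
        (Finset.mem_filter.1 hc').2
      rw [MonoidHom.mem_ker]
      show χ w (FreeGroup.mk (W c)) = 1
      rw [χ_apply, hval]
      have : lin w pq = 0 := by
        rw [hw]
        split
        · rename_i h0
          subst h0
          show (1 : ℤ) * 0 + 0 * 0 = 0
          ring
        · show pq.2 * pq.1 + -pq.1 * pq.2 = 0
          ring
      rw [this]
      rfl
    have hle : Subgroup.closure S ≤ MonoidHom.ker (χ w) := (Subgroup.closure_le _).2 hgen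
    have := Subgroup.index_dvd_of_le hle
    rw [χ_ker_index w hwne] at this
    exact zero_dvd_iff.1 this
  · -- growth lower bound
    intro m
    haveI := ball_finite (Subgroup.closure S) (m * (j + 2))
    have hinj : Function.Injective (fun cs : Fin m → ↥C =>
        (⟨gP (List.ofFn fun i => (cs i : Fin j → Fin 3)), by
          refine ⟨gP_mem _ ?_, ?_⟩
          · intro c hc
            obtain ⟨i, hi⟩ := List.mem_ofFn.1 hc
            exact Set.mem_image_of_mem _ (by rw [← hi]; exact Finset.mem_coe.2 (cs i).2)
          · rw [norm_gP]
            simp⟩ :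
          {g : FreeGroup (Fin 2) // g ∈ Subgroup.closure S ∧ g.norm ≤ m * (j + 2)})) := by
      intro cs cs' h
      have h1 : gP (List.ofFn fun i => (cs i : Fin j → Fin 3))
          = gP (List.ofFn fun i => (cs' i : Fin j → Fin 3)) := congrArg Subtype.val h
      have h2 := List.ofFn_injective (gP_inj h1)
      funext i
      exact Subtype.ext (congrFun h2 i)
    have := Nat.card_le_card_of_injective _ hinj
    calc (n₀ j) ^ m ≤ C.card ^ m := Nat.pow_le_pow_left hpq m
      _ = Nat.card (Fin m → ↥C) := by
          rw [Nat.card_eq_fintype_card, Fintype.card_fun]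
          simp
      _ ≤ _ := this

lemma inv_shift_tendsto (d : ℝ) : Tendsto (fun n : ℕ => ((n : ℝ) + d)⁻¹) atTop (nhds 0) :=
  tendsto_inv_atTop_zero.comp (tendsto_atTop_add_const_right _ d tendsto_natCast_atTop_atTop)

lemma log_lin_div_tendsto (a b d : ℝ) (ha : 0 < a) (hd : 0 ≤ d) :
    Tendsto (fun n : ℕ => Real.log (a * n + b) / ((n : ℝ) + d)) atTop (nhds 0) := by
  have hlin : Tendsto (fun n : ℕ => a * (n : ℝ) + b) atTop atTop :=
    tendsto_atTop_add_const_right _ b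
      (Tendsto.const_mul_atTop ha tendsto_natCast_atTop_atTop)
  have h1 : Tendsto (fun n : ℕ => Real.log (a * n + b) / (a * n + b)) atTop (nhds 0) :=
    (Real.isLittleO_log_id_atTop.tendsto_div_nhds_zero).comp hlin
  have h2 : Tendsto (fun n : ℕ => (a * (n : ℝ) + b) / ((n : ℝ) + d)) atTop (nhds a) := by
    have key : Tendsto (fun n : ℕ => a + (b - a * d) * ((n : ℝ) + d)⁻¹) atTop
        (nhds (a + (b - a * d) * 0)) :=
      tendsto_const_nhds.add (tendsto_const_nhds.mul (inv_shift_tendsto d))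
    rw [mul_zero, add_zero] at key
    apply key.congr'
    filter_upwards [eventually_gt_atTop 0] with n hn
    have hne : (n : ℝ) + d ≠ 0 := by
      have : (1 : ℝ) ≤ (n : ℝ) := by exact_mod_cast hn
      nlinarith
    field_simp
    ring
  have h3 := h1.mul h2
  rw [zero_mul] at h3
  apply h3.congr'
  filter_upwards [hlin.eventually_ge_atTop 1] with n h1n
  have hne : a * (n : ℝ) + b ≠ 0 := by
    intro h
    rw [h] at h1n
    norm_num at h1n
  exact div_mul_div_cancel₀ hne

lemma lin_le_pow16 : ∀ n : ℕ, 1 ≤ n → 4 * n + 5 ≤ 16 ^ n := by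
  intro n hn
  induction n with
  | zero => omega
  | succ m ih =>
    by_cases hm : 1 ≤ m
    · have := ih hm
      have h16 : 16 ^ m ≥ 16 := by
        calc 16 ^ m ≥ 16 ^ 1 := Nat.pow_le_pow_right (by norm_num) hm
          _ = 16 := by norm_num
      calc 4 * (m + 1) + 5 = (4 * m + 5) + 4 := by ring
        _ ≤ 16 ^ m + 4 := by omega
        _ ≤ 16 ^ m + 15 * 16 ^ m := by omega
        _ = 16 ^ (m + 1) := by ring
    · interval_cases m <;> norm_num

lemma card_ball_le' (H : Subgroup (FreeGroup (Fin 2))) (n : ℕ) (hn : 1 ≤ n) :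
    Nat.card {g : FreeGroup (Fin 2) // g ∈ H ∧ g.norm ≤ n} ≤ 48 ^ n := by
  refine le_trans (card_ball_le H n) ?_
  have h3 : 1 ≤ 3 ^ n := Nat.one_le_pow _ _ (by norm_num)
  calc 4 * (n + 1) * 3 ^ n + 1 ≤ 4 * (n + 1) * 3 ^ n + 3 ^ n := by omega
    _ = (4 * n + 5) * 3 ^ n := by ring
    _ ≤ 16 ^ n * 3 ^ n := Nat.mul_le_mul_right _ (lin_le_pow16 n hn)
    _ = 48 ^ n := by rw [← Nat.mul_pow]

lemma u_le_48 (H : Subgroup (FreeGroup (Fin 2))) (n : ℕ) :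
    (Nat.card {g : FreeGroup (Fin 2) // g ∈ H ∧ g.norm ≤ n} : ℝ) ^ ((1 : ℝ) / n) ≤ 48 := by
  rcases Nat.eq_zero_or_pos n with hn | hn
  · subst hn
    norm_num
  · have hcast : ((Nat.card {g : FreeGroup (Fin 2) // g ∈ H ∧ g.norm ≤ n} : ℕ) : ℝ)
        ≤ ((48 : ℝ) ^ (n : ℕ)) := by
      have := card_ball_le' H n hn
      exact_mod_cast this
    have h1 := Real.rpow_le_rpow (by positivity) hcast (by positivity : (0:ℝ) ≤ 1 / n)
    refine le_trans h1 ?_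
    rw [← Real.rpow_natCast 48 n, ← Real.rpow_mul (by norm_num)]
    rw [mul_one_div, div_self (by exact_mod_cast hn.ne' : (n : ℝ) ≠ 0), Real.rpow_one]

lemma u_nonneg (H : Subgroup (FreeGroup (Fin 2))) (n : ℕ) :
    0 ≤ (Nat.card {g : FreeGroup (Fin 2) // g ∈ H ∧ g.norm ≤ n} : ℝ) ^ ((1 : ℝ) / n) :=
  Real.rpow_nonneg (by positivity) _

lemma growthRate_le_three (H : Subgroup (FreeGroup (Fin 2))) : subgroupGrowthRate H ≤ 3 := by
  have hv : Tendsto (fun n : ℕ => ((8 : ℝ) * (n + 1)) ^ ((1 : ℝ) / n) * 3) atTop (nhds 3) := by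
    have h0 := log_lin_div_tendsto 8 8 0 (by norm_num) (le_refl 0)
    have h1 : Tendsto (fun n : ℕ => Real.exp (Real.log (8 * n + 8) / ((n : ℝ) + 0))) atTop
        (nhds 1) := by
      have := (Real.continuous_exp.tendsto 0).comp h0
      simpa [Function.comp_def] using this
    have h2 : Tendsto (fun n : ℕ => ((8 : ℝ) * (n + 1)) ^ ((1 : ℝ) / n)) atTop (nhds 1) := by
      apply h1.congr'
      filter_upwards [eventually_ge_atTop 1] with n hn
      have hpos : (0 : ℝ) < 8 * ((n : ℝ) + 1) := by positivity
      have h8 : 8 * ((n : ℝ) + 1) = 8 * (n : ℝ) + 8 := by ring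
      rw [Real.rpow_def_of_pos hpos, mul_one_div, add_zero, h8]
    have := h2.mul (tendsto_const_nhds (x := (3 : ℝ)))
    simpa using this
  have hcmp : ∀ᶠ n in atTop,
      (Nat.card {g : FreeGroup (Fin 2) // g ∈ H ∧ g.norm ≤ n} : ℝ) ^ ((1 : ℝ) / n)
        ≤ ((8 : ℝ) * (n + 1)) ^ ((1 : ℝ) / n) * 3 := by
    filter_upwards [eventually_ge_atTop 1] with n hn
    have hnat : Nat.card {g : FreeGroup (Fin 2) // g ∈ H ∧ g.norm ≤ n}
        ≤ 8 * (n + 1) * 3 ^ n := by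
      refine le_trans (card_ball_le H n) ?_
      have h1 : 0 < 4 * (n + 1) * 3 ^ n := by positivity
      calc 4 * (n + 1) * 3 ^ n + 1 ≤ 4 * (n + 1) * 3 ^ n + 4 * (n + 1) * 3 ^ n := by omega
        _ = 8 * (n + 1) * 3 ^ n := by ring
    have hcast : (Nat.card {g : FreeGroup (Fin 2) // g ∈ H ∧ g.norm ≤ n} : ℝ)
        ≤ (8 : ℝ) * (n + 1) * 3 ^ n := by exact_mod_cast hnat
    have h1 := Real.rpow_le_rpow (by positivity) hcast (by positivity : (0:ℝ) ≤ 1 / n)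
    refine le_trans h1 ?_
    rw [Real.mul_rpow (by positivity) (by positivity)]
    apply mul_le_mul_of_nonneg_left _ (Real.rpow_nonneg (by positivity) _)
    rw [← Real.rpow_natCast 3 n, ← Real.rpow_mul (by norm_num), mul_one_div,
      div_self (by exact_mod_cast (by omega : n ≠ 0) : (n : ℝ) ≠ 0), Real.rpow_one]
  rw [subgroupGrowthRate]
  have hcob : Filter.IsCoboundedUnder (· ≤ ·) atTop
      (fun n : ℕ => (Nat.card {g : FreeGroup (Fin 2) // g ∈ H ∧ g.norm ≤ n} : ℝ)
        ^ ((1 : ℝ) / n)) := by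
    refine Filter.IsBoundedUnder.isCoboundedUnder_le ⟨0, ?_⟩
    rw [Filter.eventually_map]
    exact Filter.Eventually.of_forall (fun n => u_nonneg H n)
  refine le_trans (Filter.limsup_le_limsup hcmp hcob hv.isBoundedUnder_le) ?_
  rw [hv.limsup_eq]

lemma growth_lb (Gr : Subgroup (FreeGroup (Fin 2))) (L : ℕ) (hL : 1 ≤ L) (c : ℕ)
    (hc : ∀ m : ℕ, c ^ m ≤ Nat.card {g : FreeGroup (Fin 2) // g ∈ Gr ∧ g.norm ≤ m * L}) :
    (c : ℝ) ^ ((1 : ℝ) / (L : ℝ)) ≤ subgroupGrowthRate Gr := by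
  rw [subgroupGrowthRate]
  apply Filter.le_limsup_of_frequently_le
  · rw [Filter.frequently_atTop]
    intro N
    refine ⟨(N + 1) * L, ?_, ?_⟩
    · calc N ≤ N + 1 := by omega
        _ ≤ (N + 1) * L := Nat.le_mul_of_pos_right _ (by omega)
    · set m := N + 1 with hm
      have hcard := hc m
      have hcast : ((c : ℝ) ^ (m : ℕ))
          ≤ (Nat.card {g : FreeGroup (Fin 2) // g ∈ Gr ∧ g.norm ≤ m * L} : ℝ) := by
        exact_mod_cast hcard
      have h1 := Real.rpow_le_rpow (by positivity) hcast
        (by positivity : (0 : ℝ) ≤ 1 / ((m * L : ℕ) : ℝ))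
      refine le_trans (le_of_eq ?_) h1
      rw [← Real.rpow_natCast (c : ℝ) m, ← Real.rpow_mul (by positivity)]
      congr 1
      have hLne : (L : ℝ) ≠ 0 := by
        exact_mod_cast (by omega : L ≠ 0)
      have hmne : (m : ℝ) ≠ 0 := by
        exact_mod_cast (by omega : m ≠ 0)
      push_cast
      field_simp
  · exact ⟨48, by
      rw [Filter.eventually_map]
      exact Filter.Eventually.of_forall (u_le_48 Gr)⟩

lemma pow3_ge : ∀ j : ℕ, 8 ≤ j → 2 * (2 * j + 5) ^ 2 ≤ 3 ^ j := by
  intro j hj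
  induction j, hj using Nat.le_induction with
  | base => norm_num
  | succ n hn ih =>
    calc 2 * (2 * (n + 1) + 5) ^ 2 ≤ 3 * (2 * (2 * n + 5) ^ 2) := by nlinarith
      _ ≤ 3 * 3 ^ n := by omega
      _ = 3 ^ (n + 1) := by ring

lemma n₀_cast_lb (j : ℕ) (hj : 8 ≤ j) :
    (3 : ℝ) ^ j / (2 * (2 * (j : ℝ) + 5) ^ 2) ≤ (n₀ j : ℝ) := by
  set D : ℕ := (2 * j + 5) ^ 2 with hD
  have hDpos : 0 < D := by positivity
  have hmod : 3 ^ j < D * n₀ j + D := by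
    have h2 := Nat.mod_lt (3 ^ j) hDpos
    have key : 3 ^ j < D * (3 ^ j / D) + D := by
      calc 3 ^ j = D * (3 ^ j / D) + 3 ^ j % D := (Nat.div_add_mod _ _).symm
        _ < D * (3 ^ j / D) + D := Nat.add_lt_add_left h2 _
    have hn : n₀ j = 3 ^ j / D := rfl
    rw [hn]
    exact key
  have h2r : 2 * (D : ℝ) ≤ (3 : ℝ) ^ j := by
    have := pow3_ge j hj
    calc 2 * (D : ℝ) = ((2 * D : ℕ) : ℝ) := by push_cast; ring
      _ ≤ ((3 ^ j : ℕ) : ℝ) := by exact_mod_cast this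
      _ = (3 : ℝ) ^ j := by push_cast; ring
  have hmr : (3 : ℝ) ^ j < (D : ℝ) * (n₀ j : ℝ) + (D : ℝ) := by exact_mod_cast hmod
  have hDr : (0 : ℝ) < (D : ℝ) := by exact_mod_cast hDpos
  have hDcast : (2 * (2 * (j : ℝ) + 5) ^ 2) = 2 * (D : ℝ) := by
    rw [hD]; push_cast; ring
  rw [hDcast, div_le_iff₀ (by linarith)]
  nlinarith

lemma n₀_tendsto :
    Tendsto (fun j : ℕ => ((n₀ j : ℝ)) ^ ((1 : ℝ) / ((j : ℝ) + 2))) atTop (nhds 3) := by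
  -- the lower comparison sequence
  have hw : Tendsto (fun j : ℕ =>
      ((3 : ℝ) ^ j / (2 * (2 * (j : ℝ) + 5) ^ 2)) ^ ((1 : ℝ) / ((j : ℝ) + 2))) atTop
      (nhds 3) := by
    have t1 : Tendsto (fun j : ℕ => (j : ℝ) / ((j : ℝ) + 2)) atTop (nhds 1) := by
      have key : Tendsto (fun j : ℕ => 1 - 2 * ((j : ℝ) + 2)⁻¹) atTop (nhds (1 - 2 * 0)) :=
        tendsto_const_nhds.sub (tendsto_const_nhds.mul (inv_shift_tendsto 2))
      rw [mul_zero, sub_zero] at key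
      apply key.congr
      intro j
      have : (j : ℝ) + 2 ≠ 0 := by positivity
      field_simp
      ring
    have t2 : Tendsto (fun j : ℕ => Real.log 2 * ((j : ℝ) + 2)⁻¹) atTop (nhds (Real.log 2 * 0)) :=
      tendsto_const_nhds.mul (inv_shift_tendsto 2)
    have t3 := log_lin_div_tendsto 2 5 2 (by norm_num) (by norm_num)
    have t4 : Tendsto (fun j : ℕ => (2 : ℝ) * (Real.log (2 * (j : ℝ) + 5) / ((j : ℝ) + 2)))
        atTop (nhds (2 * 0)) := tendsto_const_nhds.mul t3
    have hs : Tendsto (fun j : ℕ =>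
        (j : ℝ) / ((j : ℝ) + 2) * Real.log 3 - Real.log 2 * ((j : ℝ) + 2)⁻¹
          - 2 * (Real.log (2 * (j : ℝ) + 5) / ((j : ℝ) + 2))) atTop
        (nhds (1 * Real.log 3 - Real.log 2 * 0 - 2 * 0)) :=
      ((t1.mul tendsto_const_nhds).sub t2).sub t4
    have hval : (1 * Real.log 3 - Real.log 2 * 0 - 2 * 0) = Real.log 3 := by ring
    rw [hval] at hs
    have hexp : Tendsto (fun j : ℕ => Real.exp (
        (j : ℝ) / ((j : ℝ) + 2) * Real.log 3 - Real.log 2 * ((j : ℝ) + 2)⁻¹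
          - 2 * (Real.log (2 * (j : ℝ) + 5) / ((j : ℝ) + 2)))) atTop
        (nhds (Real.exp (Real.log 3))) := (Real.continuous_exp.tendsto _).comp hs
    rw [Real.exp_log (by norm_num : (0:ℝ) < 3)] at hexp
    apply hexp.congr
    intro j
    have hXpos : (0 : ℝ) < (3 : ℝ) ^ j / (2 * (2 * (j : ℝ) + 5) ^ 2) := by positivity
    rw [Real.rpow_def_of_pos hXpos, mul_one_div]
    congr 1
    have h3ne : ((3 : ℝ) ^ j) ≠ 0 := by positivity
    have hdne : (2 * (2 * (j : ℝ) + 5) ^ 2) ≠ 0 := by positivity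
    have h25 : (2 * (j : ℝ) + 5) ≠ 0 := by positivity
    rw [Real.log_div h3ne hdne, Real.log_mul (by norm_num) (by positivity), Real.log_pow,
      Real.log_pow]
    have hne2 : (j : ℝ) + 2 ≠ 0 := by positivity
    field_simp
    ring
  -- upper bound by the constant 3
  have hub : ∀ j : ℕ, ((n₀ j : ℝ)) ^ ((1 : ℝ) / ((j : ℝ) + 2)) ≤ 3 := by
    intro j
    have h1 : (n₀ j : ℝ) ≤ (3 : ℝ) ^ j := by
      have : n₀ j ≤ 3 ^ j := Nat.div_le_self _ _
      calc (n₀ j : ℝ) ≤ ((3 ^ j : ℕ) : ℝ) := by exact_mod_cast this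
        _ = (3 : ℝ) ^ j := by push_cast; ring
    have h2 := Real.rpow_le_rpow (by positivity) h1 (by positivity : (0:ℝ) ≤ 1 / ((j : ℝ) + 2))
    refine le_trans h2 ?_
    rw [← Real.rpow_natCast 3 j, ← Real.rpow_mul (by norm_num), mul_one_div]
    calc (3 : ℝ) ^ ((j : ℝ) / ((j : ℝ) + 2)) ≤ (3 : ℝ) ^ (1 : ℝ) := by
          apply Real.rpow_le_rpow_of_exponent_le (by norm_num)
          rw [div_le_one (by positivity)]
          linarith
      _ = 3 := Real.rpow_one 3
  -- lower comparison eventually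
  have hlb : ∀ᶠ j : ℕ in atTop, ((3 : ℝ) ^ j / (2 * (2 * (j : ℝ) + 5) ^ 2)) ^ ((1 : ℝ) / ((j : ℝ) + 2))
      ≤ ((n₀ j : ℝ)) ^ ((1 : ℝ) / ((j : ℝ) + 2)) := by
    filter_upwards [eventually_ge_atTop 8] with j hj
    exact Real.rpow_le_rpow (by positivity) (n₀_cast_lb j hj) (by positivity)
  exact tendsto_of_tendsto_of_tendsto_of_le_of_le' hw tendsto_const_nhds hlb
    (Filter.Eventually.of_forall hub)

lemma lo_tendsto : Tendsto (fun k : ℕ => 3 * ((2 : ℝ) / 3) ^ ((1 : ℝ) / (k : ℝ))) atTop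
    (nhds 3) := by
  have hinner : Tendsto (fun k : ℕ => Real.log (2 / 3) * ((1 : ℝ) / (k : ℝ))) atTop
      (nhds (Real.log (2 / 3) * 0)) :=
    tendsto_const_nhds.mul tendsto_one_div_atTop_nhds_zero_nat
  rw [mul_zero] at hinner
  have hexp := (Real.continuous_exp.tendsto _).comp hinner
  rw [Real.exp_zero] at hexp
  have h1 : Tendsto (fun k : ℕ => 3 * Real.exp (Real.log (2 / 3) * ((1 : ℝ) / (k : ℝ)))) atTop
      (nhds (3 * 1)) := tendsto_const_nhds.mul hexp
  rw [mul_one] at h1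
  apply h1.congr
  intro k
  rw [Real.rpow_def_of_pos (by norm_num : (0:ℝ) < 2 / 3)]

lemma key_step : ∀ k : ℕ, ∃ G : Subgroup (FreeGroup (Fin 2)), G.FG ∧ G.index = 0 ∧
    (1 ≤ k → (3 : ℝ) * ((2 : ℝ) / 3) ^ ((1 : ℝ) / (k : ℝ)) ≤ subgroupGrowthRate G) ∧
    subgroupGrowthRate G ≤ 3 := by
  intro k
  by_cases hk : 1 ≤ k
  · -- target is strictly below 3
    have htar : (3 : ℝ) * ((2 : ℝ) / 3) ^ ((1 : ℝ) / (k : ℝ)) < 3 := by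
      have hklt : (0 : ℝ) < (k : ℝ) := by exact_mod_cast hk
      have h1 : ((2 : ℝ) / 3) ^ ((1 : ℝ) / (k : ℝ)) < 1 :=
        Real.rpow_lt_one (by norm_num) (by norm_num) (by positivity)
      nlinarith
    obtain ⟨j, hj⟩ := (n₀_tendsto.eventually (eventually_gt_nhds htar)).exists
    obtain ⟨G, hFG, hidx, hcount⟩ := exists_good j
    have hrate : ((n₀ j : ℝ)) ^ ((1 : ℝ) / ((j + 2 : ℕ) : ℝ)) ≤ subgroupGrowthRate G :=
      growth_lb G (j + 2) (by omega) (n₀ j) hcount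
    have hcast : ((j + 2 : ℕ) : ℝ) = (j : ℝ) + 2 := by push_cast; ring
    rw [hcast] at hrate
    exact ⟨G, hFG, hidx, fun _ => le_trans (le_of_lt hj) hrate,
      growthRate_le_three G⟩
  · obtain ⟨G, hFG, hidx, _⟩ := exists_good 0
    exact ⟨G, hFG, hidx, fun h => absurd h hk, growthRate_le_three G⟩

end GrowthProof

/-- there is a sequence of finitely generated infinite-index subgroups
`H_k` of the free group `F_2` whose growth rates converge to `3 = λ_{F_2}`; indeed one
can choose `H_k` with `λ_{H_k} ≥ 3·(2/3)^{1/k}`. -/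
theorem exists_subgroups_growth_tendsto_three :
    ∃ H : ℕ → Subgroup (FreeGroup (Fin 2)),
      (∀ k : ℕ, 1 ≤ k → (H k).FG ∧ (H k).index = 0 ∧
        (3 : ℝ) * ((2 : ℝ) / 3) ^ ((1 : ℝ) / (k : ℝ)) ≤ subgroupGrowthRate (H k)) ∧
      Tendsto (fun k : ℕ => subgroupGrowthRate (H k)) atTop (nhds 3) := by
  choose Hf h1 h2 h3 h4 using GrowthProof.key_step
  refine ⟨Hf, fun k hk => ⟨h1 k, h2 k, h3 k hk⟩, ?_⟩
  refine tendsto_of_tendsto_of_tendsto_of_le_of_le' GrowthProof.lo_tendsto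
    tendsto_const_nhds ?_ (Filter.Eventually.of_forall h4)
  filter_upwards [Filter.eventually_ge_atTop 1] with k hk
  exact h3 k hk
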